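/- Let N ≥ 1 and n ≥ N be integers and let x ∈ ℝ. Then the improper integral ∫_x^∞ (y−x)^{2N−2} · (1−iy)^{n−N} · (1+iy)^{−(n+N)} dy converges and equals i·(−1)^N · (2N−2)! · ( (n−N)! / (N+n−1)! ) · [ 2^{1−2N} · (1−ix)^n (1+ix)^{−n} (1+x²)^{N−1} + ( (−1)^{n+N} / 2 ) · Σ_{k=0}^{2N−2} binomial(n+N−1, 2N−2−k) · ( (1+ix)/(−2) )^k ]. -/

import Mathlib

open Complex MeasureTheory Set Filter Finset Topology

namespace Stmt19Aux

lemma one_add_ne (y : ℝ) : (1 : ℂ) + Complex.I * y ≠ 0 := by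
  intro h
  have h1 := congrArg Complex.re h
  simp at h1

lemma norm_one_add (y : ℝ) : ‖(1 : ℂ) + Complex.I * y‖ = Real.sqrt (1 + y ^ 2) := by
  rw [Complex.norm_def, Complex.normSq_apply]
  norm_num [Complex.add_re, Complex.add_im, Complex.mul_re, Complex.mul_im]
  ring_nf

lemma norm_one_sub (y : ℝ) : ‖(1 : ℂ) - Complex.I * y‖ = Real.sqrt (1 + y ^ 2) := by
  rw [Complex.norm_def, Complex.normSq_apply]
  norm_num [Complex.sub_re, Complex.sub_im, Complex.mul_re, Complex.mul_im]
  ring_nf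

lemma sqrt_one_le (y : ℝ) : 1 ≤ Real.sqrt (1 + y ^ 2) :=
  Real.one_le_sqrt.mpr (by nlinarith)

lemma abs_sub_le' (x y : ℝ) :
    |y - x| ≤ Real.sqrt (2 * (1 + x ^ 2)) * Real.sqrt (1 + y ^ 2) := by
  rw [← Real.sqrt_mul (by positivity), ← Real.sqrt_sq_eq_abs]
  exact Real.sqrt_le_sqrt (by nlinarith [sq_nonneg (x+y), sq_nonneg (x*y)])

lemma key_integrable (x : ℝ) (a b m : ℕ) (h : a + b + 2 ≤ m) :
    IntegrableOn (fun y : ℝ =>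
      ((y : ℂ) - x) ^ a * (1 - Complex.I * y) ^ b * (1 + Complex.I * y) ^ (-(m : ℤ)))
      (Set.Ioi x) := by
  set c : ℝ := (Real.sqrt (2 * (1 + x ^ 2))) ^ a with hc
  have hcont : Continuous (fun y : ℝ =>
      ((y : ℂ) - x) ^ a * (1 - Complex.I * y) ^ b * (1 + Complex.I * y) ^ (-(m : ℤ))) := by
    refine ((Continuous.mul ?_ ?_).mul ?_)
    · exact (Complex.continuous_ofReal.sub continuous_const).pow a
    · exact (continuous_const.sub (continuous_const.mul Complex.continuous_ofReal)).pow b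
    · exact (continuous_const.add (continuous_const.mul Complex.continuous_ofReal)).zpow₀
        (-(m:ℤ)) (fun y => Or.inl (one_add_ne y))
  refine Integrable.mono' ((integrable_inv_one_add_sq.const_mul c).restrict)
    hcont.aestronglyMeasurable (ae_of_all _ fun y => ?_)
  have ht1 : (1:ℝ) ≤ Real.sqrt (1 + y ^ 2) := sqrt_one_le y
  have ht0 : (0:ℝ) < Real.sqrt (1 + y ^ 2) := lt_of_lt_of_le one_pos ht1
  have hsq : Real.sqrt (1 + y ^ 2) ^ 2 = 1 + y ^ 2 := Real.sq_sqrt (by positivity)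
  rw [norm_mul, norm_mul, norm_pow, norm_pow, norm_zpow, norm_one_add, norm_one_sub]
  have hnyx : ‖(y : ℂ) - (x:ℂ)‖ = |y - x| := by
    rw [← Complex.ofReal_sub, Complex.norm_real, Real.norm_eq_abs]
  rw [hnyx, zpow_neg, zpow_natCast]
  set t := Real.sqrt (1 + y ^ 2) with htdef
  have h1 : |y - x| ^ a ≤ c * t ^ a := by
    rw [hc, ← mul_pow]
    exact pow_le_pow_left₀ (abs_nonneg _) (abs_sub_le' x y) a
  have hm : t ^ (a + b + 2) ≤ t ^ m := pow_le_pow_right₀ ht1 h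
  calc |y - x| ^ a * t ^ b * (t ^ m)⁻¹
      ≤ (c * t ^ a) * t ^ b * (t ^ (a + b + 2))⁻¹ := by
        exact mul_le_mul (mul_le_mul_of_nonneg_right h1 (by positivity))
          (inv_anti₀ (by positivity) hm) (by positivity) (by positivity)
    _ = c * (1 + y ^ 2)⁻¹ := by
        rw [← hsq]; field_simp; ring

lemma key_tendsto (x : ℝ) (a m : ℕ) (h : a + 2 ≤ m) :
    Tendsto (fun y : ℝ => ((y : ℂ) - x) ^ a * (1 + Complex.I * y) ^ (1 - (m : ℤ)))
      atTop (𝓝 0) := by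
  rw [tendsto_zero_iff_norm_tendsto_zero]
  have hg : Tendsto (fun y : ℝ => (Real.sqrt (2 * (1 + x ^ 2))) ^ a * y⁻¹) atTop (𝓝 0) := by
    have h0 := Filter.Tendsto.const_mul ((Real.sqrt (2 * (1 + x ^ 2))) ^ a : ℝ) (tendsto_inv_atTop_zero (𝕜 := ℝ))
    rwa [mul_zero] at h0
  refine squeeze_zero' (Eventually.of_forall fun y => norm_nonneg _)
    ?_ hg
  filter_upwards [eventually_ge_atTop (1:ℝ)] with y hy
  have ht1 : (1:ℝ) ≤ Real.sqrt (1 + y ^ 2) := sqrt_one_le y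
  have ht0 : (0:ℝ) < Real.sqrt (1 + y ^ 2) := lt_of_lt_of_le one_pos ht1
  rw [norm_mul, norm_pow, norm_zpow, norm_one_add]
  have hnyx : ‖(y : ℂ) - (x:ℂ)‖ = |y - x| := by
    rw [← Complex.ofReal_sub, Complex.norm_real, Real.norm_eq_abs]
  rw [hnyx]
  set t := Real.sqrt (1 + y ^ 2) with htdef
  set c : ℝ := (Real.sqrt (2 * (1 + x ^ 2))) ^ a with hc
  have h1 : |y - x| ^ a ≤ c * t ^ a := by
    rw [hc, ← mul_pow]
    exact pow_le_pow_left₀ (abs_nonneg _) (abs_sub_le' x y) a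
  have hty : y ≤ t := by
    rw [htdef]
    nlinarith [Real.sq_sqrt (show (0:ℝ) ≤ 1 + y^2 by positivity), Real.sqrt_nonneg (1+y^2)]
  calc |y - x| ^ a * t ^ (1 - (m:ℤ))
      ≤ (c * t ^ a) * t ^ (1 - (m:ℤ)) := by
        exact mul_le_mul_of_nonneg_right h1 (by positivity)
    _ = c * t ^ ((a : ℤ) + (1 - (m:ℤ))) := by
        rw [zpow_add₀ (ne_of_gt ht0), zpow_natCast]; ring
    _ ≤ c * t ^ (-1 : ℤ) := by
        have := zpow_le_zpow_right₀ ht1 (show (a : ℤ) + (1 - (m:ℤ)) ≤ -1 by omega)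
        exact mul_le_mul_of_nonneg_left this (by positivity)
    _ ≤ c * y⁻¹ := by
        rw [zpow_neg_one]
        exact mul_le_mul_of_nonneg_left
          (inv_anti₀ (lt_of_lt_of_le one_pos hy) hty) (by positivity)

lemma key_deriv (x : ℝ) (a : ℕ) (r : ℤ) (y : ℝ) :
    HasDerivAt (fun y : ℝ => ((y : ℂ) - x) ^ a * (1 + Complex.I * y) ^ r)
      ((a : ℂ) * ((y : ℂ) - x) ^ (a - 1) * (1 + Complex.I * y) ^ r
        + ((y : ℂ) - x) ^ a * ((r : ℂ) * (1 + Complex.I * y) ^ (r - 1) * Complex.I)) y := by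
  have h1 : HasDerivAt (fun z : ℂ => (z - x) ^ a) ((a : ℂ) * ((y : ℂ) - x) ^ (a - 1)) (y : ℂ) := by
    refine (((hasDerivAt_id (y:ℂ)).sub_const (x:ℂ)).pow a).congr_deriv ?_
    simp
  have hinner : HasDerivAt (fun z : ℂ => 1 + Complex.I * z) Complex.I (y : ℂ) := by
    simpa using (((hasDerivAt_id (y:ℂ)).const_mul Complex.I).const_add 1)
  have houter : HasDerivAt (fun w : ℂ => w ^ r)
      ((r : ℂ) * (1 + Complex.I * y) ^ (r - 1)) (1 + Complex.I * y) :=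
    hasDerivAt_zpow r _ (Or.inl (one_add_ne y))
  have h2 : HasDerivAt (fun z : ℂ => (1 + Complex.I * z) ^ r)
      ((r : ℂ) * (1 + Complex.I * y) ^ (r - 1) * Complex.I) (y : ℂ) :=
    by have h := HasDerivAt.comp (y : ℂ) houter hinner; exact h
  exact (h1.mul h2).comp_ofReal

lemma keyA (x : ℝ) : ∀ (a m : ℕ), a + 2 ≤ m →
    (∫ y in Set.Ioi x, ((y : ℂ) - x) ^ a * (1 + Complex.I * y) ^ (-(m : ℤ)))
      = (-Complex.I) ^ (a + 1) * (a.factorial : ℂ) * (((m - a - 2).factorial : ℕ) : ℂ)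
          / (((m - 1).factorial : ℕ) : ℂ) * (1 + Complex.I * x) ^ ((a : ℤ) + 1 - m) := by
  intro a
  induction a with
  | zero =>
    intro m hm
    have h2m : 2 ≤ m := by omega
    have hm1 : ((m : ℂ) - 1) ≠ 0 := by
      have : ((m:ℕ) : ℂ) ≠ ((1:ℕ) : ℂ) := by
        exact_mod_cast Nat.cast_injective.ne (by omega : m ≠ 1)
      simpa [sub_ne_zero] using this
    have hcI : (Complex.I * (1 - (m:ℂ)))⁻¹ = Complex.I * ((m:ℂ) - 1)⁻¹ := by
      rw [show (1 - (m:ℂ)) = -((m:ℂ) - 1) by ring, mul_neg, inv_neg, mul_inv, Complex.inv_I]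
      ring
    have hmne : ((1:ℂ) - (m:ℂ)) ≠ 0 := by
      intro h
      apply hm1
      have : (m:ℂ) = 1 := by linear_combination -h
      rw [this]; ring
    have hclear : (Complex.I * (1 - (m:ℂ)))⁻¹ * (Complex.I * (1 - (m:ℂ))) = 1 :=
      inv_mul_cancel₀ (mul_ne_zero Complex.I_ne_zero hmne)
    have hderiv : ∀ y ∈ Set.Ici x,
        HasDerivAt (fun y : ℝ => (Complex.I * (1 - (m:ℂ)))⁻¹ * (((y:ℂ) - x) ^ 0 * (1 + Complex.I * y) ^ (1 - (m:ℤ))))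
          (((y:ℂ) - x) ^ 0 * (1 + Complex.I * y) ^ (-(m : ℤ))) y := by
      intro y _
      have hd := (key_deriv x 0 (1 - (m:ℤ)) y).const_mul (Complex.I * (1 - (m:ℂ)))⁻¹
      refine hd.congr_deriv (Eq.symm ?_)
      rw [show (1:ℤ) - m - 1 = -(m:ℤ) by ring]
      push_cast
      linear_combination (-(((1:ℂ) + Complex.I * (y:ℂ)) ^ (-(m:ℤ)))) * hclear
    have hint : IntegrableOn
        (fun y : ℝ => ((y:ℂ) - x) ^ 0 * (1 + Complex.I * y) ^ (-(m : ℤ))) (Set.Ioi x) := by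
      simpa using key_integrable x 0 0 m (by omega)
    have htend : Tendsto (fun y : ℝ => (Complex.I * (1 - (m:ℂ)))⁻¹ * (((y:ℂ) - x) ^ 0 * (1 + Complex.I * y) ^ (1 - (m:ℤ))))
        atTop (𝓝 0) := by
      have := (key_tendsto x 0 m (by omega)).const_mul (Complex.I * (1 - (m:ℂ)))⁻¹
      rwa [mul_zero] at this
    have hI := integral_Ioi_of_hasDerivAt_of_tendsto' hderiv hint htend
    rw [hI]
    have hfact : (((m - 1).factorial : ℕ) : ℂ) = ((m:ℂ) - 1) * (((m - 2).factorial : ℕ) : ℂ) := by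
      rw [show m - 1 = (m - 2) + 1 by omega, Nat.factorial_succ]
      push_cast [Nat.cast_sub h2m]
      ring
    rw [show ((0:ℕ) : ℤ) + 1 - (m:ℤ) = 1 - (m:ℤ) by push_cast; ring]
    rw [hcI, hfact]
    have hfne : (((m - 2).factorial : ℕ) : ℂ) ≠ 0 := Nat.cast_ne_zero.mpr (Nat.factorial_ne_zero _)
    simp only [pow_zero, one_mul, Nat.factorial_zero, Nat.cast_one, pow_one,
      show m - 0 - 2 = m - 2 from rfl]
    field_simp
    ring
  | succ a ih =>
    intro m hm
    have h2m : 2 ≤ m := by omega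
    have hm1 : ((m : ℂ) - 1) ≠ 0 := by
      have : ((m:ℕ) : ℂ) ≠ ((1:ℕ) : ℂ) := by
        exact_mod_cast Nat.cast_injective.ne (by omega : m ≠ 1)
      simpa [sub_ne_zero] using this
    have hcI : (Complex.I * (1 - (m:ℂ)))⁻¹ = Complex.I * ((m:ℂ) - 1)⁻¹ := by
      rw [show (1 - (m:ℂ)) = -((m:ℂ) - 1) by ring, mul_neg, inv_neg, mul_inv, Complex.inv_I]
      ring
    have hmne : ((1:ℂ) - (m:ℂ)) ≠ 0 := by
      intro h
      apply hm1
      have : (m:ℂ) = 1 := by linear_combination -h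
      rw [this]; ring
    have hclear : (Complex.I * (1 - (m:ℂ)))⁻¹ * (Complex.I * (1 - (m:ℂ))) = 1 :=
      inv_mul_cancel₀ (mul_ne_zero Complex.I_ne_zero hmne)
    have he : (1 : ℤ) - (m:ℤ) = -(((m - 1 : ℕ)) : ℤ) := by
      push_cast [Nat.cast_sub (by omega : 1 ≤ m)]
      ring
    have hderiv : ∀ y ∈ Set.Ici x,
        HasDerivAt (fun y : ℝ => (Complex.I * (1 - (m:ℂ)))⁻¹ * (((y:ℂ) - x) ^ (a+1) * (1 + Complex.I * y) ^ (1 - (m:ℤ))))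
          (((Complex.I * (1 - (m:ℂ)))⁻¹ * ((a:ℂ)+1)) * (((y:ℂ) - x) ^ a * (1 + Complex.I * y) ^ (1 - (m:ℤ)))
            + ((y:ℂ) - x) ^ (a+1) * (1 + Complex.I * y) ^ (-(m : ℤ))) y := by
      intro y _
      have hd := (key_deriv x (a+1) (1 - (m:ℤ)) y).const_mul (Complex.I * (1 - (m:ℂ)))⁻¹
      refine hd.congr_deriv (Eq.symm ?_)
      rw [show (1:ℤ) - m - 1 = -(m:ℤ) by ring, show a + 1 - 1 = a from rfl]
      push_cast
      linear_combination (-(((y:ℂ) - x) ^ (a+1) * ((1:ℂ) + Complex.I * (y:ℂ)) ^ (-(m:ℤ)))) * hclear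
    have i1 : IntegrableOn
        (fun y : ℝ => ((y:ℂ) - x) ^ a * (1 + Complex.I * y) ^ (1 - (m:ℤ))) (Set.Ioi x) := by
      simp only [he]
      simpa using key_integrable x a 0 (m-1) (by omega)
    have i2 : IntegrableOn
        (fun y : ℝ => ((y:ℂ) - x) ^ (a+1) * (1 + Complex.I * y) ^ (-(m:ℤ))) (Set.Ioi x) := by
      simpa using key_integrable x (a+1) 0 m (by omega)
    have htend : Tendsto
        (fun y : ℝ => (Complex.I * (1 - (m:ℂ)))⁻¹ * (((y:ℂ) - x) ^ (a+1) * (1 + Complex.I * y) ^ (1 - (m:ℤ))))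
        atTop (𝓝 0) := by
      have := (key_tendsto x (a+1) m (by omega)).const_mul (Complex.I * (1 - (m:ℂ)))⁻¹
      rwa [mul_zero] at this
    have hI := integral_Ioi_of_hasDerivAt_of_tendsto' hderiv ((i1.const_mul _).add i2) htend
    have hFx : (Complex.I * (1 - (m:ℂ)))⁻¹ * (((x:ℂ) - x) ^ (a+1) * (1 + Complex.I * x) ^ (1 - (m:ℤ))) = 0 := by
      simp [sub_self]
    have hsplit :
        (∫ y in Set.Ioi x, (((Complex.I * (1 - (m:ℂ)))⁻¹ * ((a:ℂ)+1)) * (((y:ℂ) - x) ^ a * (1 + Complex.I * y) ^ (1 - (m:ℤ)))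
            + ((y:ℂ) - x) ^ (a+1) * (1 + Complex.I * y) ^ (-(m : ℤ))))
          = ((Complex.I * (1 - (m:ℂ)))⁻¹ * ((a:ℂ)+1)) * (∫ y in Set.Ioi x, ((y:ℂ) - x) ^ a * (1 + Complex.I * y) ^ (1 - (m:ℤ)))
            + ∫ y in Set.Ioi x, ((y:ℂ) - x) ^ (a+1) * (1 + Complex.I * y) ^ (-(m : ℤ)) := by
      rw [integral_add (i1.const_mul _) i2, MeasureTheory.integral_const_mul]
    have hihval :
        (∫ y in Set.Ioi x, ((y:ℂ) - x) ^ a * (1 + Complex.I * y) ^ (1 - (m:ℤ)))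
          = (-Complex.I) ^ (a + 1) * (a.factorial : ℂ) * ((((m-1) - a - 2).factorial : ℕ) : ℂ)
              / ((((m-1) - 1).factorial : ℕ) : ℂ)
              * (1 + Complex.I * x) ^ ((a : ℤ) + 1 - ((m-1 : ℕ) : ℤ)) := by
      simp only [he]
      exact ih (m-1) (by omega)
    have h0 : ((Complex.I * (1 - (m:ℂ)))⁻¹ * ((a:ℂ)+1)) * ((-Complex.I) ^ (a + 1) * (a.factorial : ℂ)
            * ((((m-1) - a - 2).factorial : ℕ) : ℂ) / ((((m-1) - 1).factorial : ℕ) : ℂ)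
            * (1 + Complex.I * x) ^ ((a : ℤ) + 1 - ((m-1 : ℕ) : ℤ)))
          + (∫ y in Set.Ioi x, ((y:ℂ) - x) ^ (a+1) * (1 + Complex.I * y) ^ (-(m : ℤ))) = 0 := by
      rw [← hihval, ← hsplit, hI, hFx]
      ring
    have h2 : (∫ y in Set.Ioi x, ((y:ℂ) - x) ^ (a+1) * (1 + Complex.I * y) ^ (-(m : ℤ)))
        = -(((Complex.I * (1 - (m:ℂ)))⁻¹ * ((a:ℂ)+1)) * ((-Complex.I) ^ (a + 1) * (a.factorial : ℂ)
            * ((((m-1) - a - 2).factorial : ℕ) : ℂ) / ((((m-1) - 1).factorial : ℕ) : ℂ)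
            * (1 + Complex.I * x) ^ ((a : ℤ) + 1 - ((m-1 : ℕ) : ℤ)))) := by
      linear_combination h0
    rw [h2]
    -- now pure algebra
    rw [show (m-1) - a - 2 = m - (a+1) - 2 by omega, show (m-1) - 1 = m - 2 by omega]
    rw [show ((a : ℤ) + 1 - ((m-1 : ℕ) : ℤ)) = (((a+1:ℕ)) : ℤ) + 1 - (m:ℤ) by
      push_cast [Nat.cast_sub (by omega : 1 ≤ m)]; ring]
    have hfact : (((m - 1).factorial : ℕ) : ℂ) = ((m:ℂ) - 1) * (((m - 2).factorial : ℕ) : ℂ) := by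
      rw [show m - 1 = (m - 2) + 1 by omega, Nat.factorial_succ]
      push_cast [Nat.cast_sub h2m]
      ring
    rw [hcI, hfact, Nat.factorial_succ, pow_succ]
    have hfne : (((m - 2).factorial : ℕ) : ℂ) ≠ 0 := Nat.cast_ne_zero.mpr (Nat.factorial_ne_zero _)
    push_cast
    field_simp
    ring

lemma polyid (p m : ℕ) (hm : 1 ≤ m) (u : ℂ) :
    (2 - u) ^ (p + m)
      = (∑ j ∈ Finset.range (p+1), ((p+m).choose j : ℂ) * 2 ^ (p+m-j) * (-u) ^ j)
        + ∑ k ∈ Finset.range m, ((p+m).choose (m-1-k) : ℂ) * 2 ^ (m-1-k) * (-u) ^ (p+1+k) := by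
  have h1 : (2 - u) ^ (p + m) = ∑ j ∈ Finset.range (p+m+1),
      (-u) ^ j * 2 ^ (p+m-j) * ((p+m).choose j : ℂ) := by
    rw [show (2 : ℂ) - u = -u + 2 by ring, add_pow]
  rw [h1, show p + m + 1 = (p+1) + m by omega, Finset.sum_range_add]
  congr 1
  · exact Finset.sum_congr rfl fun j _ => by ring
  · refine Finset.sum_congr rfl fun k hk => ?_
    have hk' : k < m := Finset.mem_range.mp hk
    have hch : (p+m).choose (p+1+k) = (p+m).choose (m-1-k) := by
      rw [show m - 1 - k = (p+m) - (p+1+k) by omega]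
      exact (Nat.choose_symm (by omega)).symm
    rw [hch, show p + m - (p+1+k) = m-1-k by omega]
    ring

end Stmt19Aux

open Stmt19Aux

/-- Closed form of the integral computing the action of `𝔏_N` (the inverse of the
intertwining operator `∂_x^{2N−1} : F_{1−N} → F_N`) on the discrete-series basis
function `ψ_n^{(N)}`, for integers `n ≥ N ≥ 1`. -/
theorem stmt19 (N n : ℕ) (hN : 1 ≤ N) (hn : N ≤ n) (x : ℝ) :
    IntegrableOn (fun y : ℝ =>
      ((y : ℂ) - x) ^ (2 * N - 2) * (1 - Complex.I * y) ^ ((n : ℤ) - N)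
        * (1 + Complex.I * y) ^ (-((n : ℤ) + N))) (Set.Ioi x) ∧
    (∫ y in Set.Ioi x,
      ((y : ℂ) - x) ^ (2 * N - 2) * (1 - Complex.I * y) ^ ((n : ℤ) - N)
        * (1 + Complex.I * y) ^ (-((n : ℤ) + N)))
      = Complex.I * (-1) ^ N * (Nat.factorial (2 * N - 2) : ℂ)
          * ((Nat.factorial (n - N) : ℂ) / (Nat.factorial (N + n - 1) : ℂ))
          * ((2 : ℂ) ^ ((1 : ℤ) - 2 * N) * (1 - Complex.I * x) ^ n
              * (1 + Complex.I * x) ^ (-(n : ℤ)) * (1 + (x : ℂ) ^ 2) ^ (N - 1)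
            + ((-1 : ℂ) ^ (n + N) / 2)
              * ∑ k ∈ Finset.range (2 * N - 1),
                  (Nat.choose (n + N - 1) (2 * N - 2 - k) : ℂ)
                    * ((1 + Complex.I * x) / (-2)) ^ k) := by
  obtain ⟨K, rfl⟩ : ∃ K, N = K + 1 := ⟨N - 1, by omega⟩
  obtain ⟨P, rfl⟩ : ∃ P, n = P + (K + 1) := ⟨n - (K + 1), by omega⟩
  have hu : (1 : ℂ) + Complex.I * (x:ℂ) ≠ 0 := one_add_ne x
  simp only [show 2 * (K + 1) - 2 = 2 * K by omega,
    show P + (K + 1) - (K + 1) = P by omega,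
    show 2 * (K + 1) - 1 = 2 * K + 1 by omega,
    show P + (K + 1) + (K + 1) = P + 2 * K + 2 by omega,
    show (K + 1) + (P + (K + 1)) = P + 2 * K + 2 by omega,
    show P + 2 * K + 2 - 1 = P + (2 * K + 1) by omega,
    show (K + 1) - 1 = K by omega]
  have hfun : ∀ y : ℝ,
      ((y : ℂ) - x) ^ (2 * K) * (1 - Complex.I * y) ^ ((↑(P + (K + 1)) : ℤ) - ↑(K + 1))
        * (1 + Complex.I * y) ^ (-((↑(P + (K + 1)) : ℤ) + ↑(K + 1)))
      = ((y : ℂ) - x) ^ (2 * K) * (1 - Complex.I * y) ^ P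
        * (1 + Complex.I * y) ^ (-(((P + 2 * K + 2 : ℕ)) : ℤ)) := by
    intro y
    rw [← zpow_natCast ((1:ℂ) - Complex.I * y) P,
      show ((P : ℕ) : ℤ) = (↑(P + (K + 1)) : ℤ) - ↑(K + 1) by omega,
      show (-(((P + 2 * K + 2 : ℕ)) : ℤ)) = -((↑(P + (K + 1)) : ℤ) + ↑(K + 1)) by
        push_cast; ring]
  constructor
  · exact (key_integrable x (2 * K) P (P + 2 * K + 2) (by omega)).congr_fun
      (fun y _ => (hfun y).symm) measurableSet_Ioi
  rw [show (fun y : ℝ =>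
      ((y : ℂ) - x) ^ (2 * K) * (1 - Complex.I * y) ^ ((↑(P + (K + 1)) : ℤ) - ↑(K + 1))
        * (1 + Complex.I * y) ^ (-((↑(P + (K + 1)) : ℤ) + ↑(K + 1))))
    = (fun y : ℝ => ((y : ℂ) - x) ^ (2 * K) * (1 - Complex.I * y) ^ P
        * (1 + Complex.I * y) ^ (-(((P + 2 * K + 2 : ℕ)) : ℤ))) from funext hfun]
  have hexp : (fun y : ℝ => ((y : ℂ) - x) ^ (2 * K) * (1 - Complex.I * y) ^ P
        * (1 + Complex.I * y) ^ (-(((P + 2 * K + 2 : ℕ)) : ℤ)))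
      = (fun y : ℝ => ∑ j ∈ Finset.range (P + 1),
          ((-1:ℂ))^j * 2^(P - j) * (P.choose j : ℂ)
            * (((y : ℂ) - x) ^ (2 * K)
                * (1 + Complex.I * y) ^ (-(((P + 2 * K + 2 - j : ℕ)) : ℤ)))) := by
    funext y
    have hb : ((1:ℂ) - Complex.I * y) ^ P
        = ∑ j ∈ Finset.range (P + 1),
            (-((1:ℂ) + Complex.I * y))^j * 2^(P - j) * (P.choose j : ℂ) := by
      rw [← add_pow, show -((1:ℂ) + Complex.I * (y:ℂ)) + 2 = 1 - Complex.I * y by ring]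
    rw [hb, Finset.mul_sum, Finset.sum_mul]
    refine Finset.sum_congr rfl fun j hj => ?_
    have hj' : j ≤ P := by simpa [Nat.lt_succ_iff] using hj
    have hz : ((1:ℂ) + Complex.I * y)^(j:ℕ)
          * ((1:ℂ) + Complex.I * y)^(-(((P + 2 * K + 2 : ℕ)) : ℤ))
        = ((1:ℂ) + Complex.I * y)^(-(((P + 2 * K + 2 - j : ℕ)) : ℤ)) := by
      rw [← zpow_natCast ((1:ℂ) + Complex.I * y) j, ← zpow_add₀ (one_add_ne y)]
      congr 1
      omega
    rw [neg_pow, ← hz]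
    ring
  rw [hexp]
  have hterm_int : ∀ j ∈ Finset.range (P + 1),
      IntegrableOn (fun y : ℝ => ((-1:ℂ))^j * 2^(P - j) * (P.choose j : ℂ)
          * (((y : ℂ) - x) ^ (2 * K)
              * (1 + Complex.I * y) ^ (-(((P + 2 * K + 2 - j : ℕ)) : ℤ)))) (Set.Ioi x) := by
    intro j hj
    have hj' : j ≤ P := by simpa [Nat.lt_succ_iff] using hj
    have h := (key_integrable x (2 * K) 0 (P + 2 * K + 2 - j) (by omega)).const_mul
      (((-1:ℂ))^j * 2^(P - j) * (P.choose j : ℂ))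
    simp only [pow_zero, mul_one, zpow_neg, zpow_natCast] at h ⊢
    exact h
  rw [MeasureTheory.integral_finset_sum _ hterm_int]
  have hval : ∀ j ∈ Finset.range (P + 1),
      (∫ y in Set.Ioi x, ((-1:ℂ))^j * 2^(P - j) * (P.choose j : ℂ)
          * (((y : ℂ) - x) ^ (2 * K)
              * (1 + Complex.I * y) ^ (-(((P + 2 * K + 2 - j : ℕ)) : ℤ))))
        = ((-1:ℂ))^j * 2^(P - j) * (P.choose j : ℂ)
            * ((-Complex.I) ^ (2 * K + 1) * ((2 * K).factorial : ℂ)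
              * (((P + 2 * K + 2 - j - (2 * K) - 2).factorial : ℕ) : ℂ)
              / (((P + 2 * K + 2 - j - 1).factorial : ℕ) : ℂ)
              * (1 + Complex.I * x) ^ ((↑(2 * K) : ℤ) + 1 - ↑(P + 2 * K + 2 - j))) := by
    intro j hj
    have hj' : j ≤ P := by simpa [Nat.lt_succ_iff] using hj
    rw [MeasureTheory.integral_const_mul, keyA x (2 * K) (P + 2 * K + 2 - j) (by omega)]
  rw [Finset.sum_congr rfl hval]
  have hsign : (-Complex.I) ^ (2 * K + 1) = Complex.I * (-1:ℂ)^(K+1) := by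
    rw [pow_succ, pow_mul, neg_sq, Complex.I_sq, pow_succ]
    ring
  have hpar : (-1:ℂ)^(P + 2 * K + 2) = (-1:ℂ)^P := by
    rw [show P + 2 * K + 2 = P + 2 * (K + 1) by ring, pow_add, pow_mul, neg_one_sq,
      one_pow, mul_one]
  -- abbreviation for the constant c
  have hL : ∀ j ∈ Finset.range (P + 1),
      ((-1:ℂ))^j * 2^(P - j) * (P.choose j : ℂ)
          * ((-Complex.I) ^ (2 * K + 1) * ((2 * K).factorial : ℂ)
            * (((P + 2 * K + 2 - j - (2 * K) - 2).factorial : ℕ) : ℂ)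
            / (((P + 2 * K + 2 - j - 1).factorial : ℕ) : ℂ)
            * (1 + Complex.I * x) ^ ((↑(2 * K) : ℤ) + 1 - ↑(P + 2 * K + 2 - j)))
        = (Complex.I * (-1:ℂ)^(K+1) * ((2 * K).factorial : ℂ) * (P.factorial : ℂ)
            / (((P + (2 * K + 1)).factorial : ℕ) : ℂ) / 2^(2 * K + 1)
            * (((1 + Complex.I * (x:ℂ)) ^ (P + 1))⁻¹))
          * (((P + (2 * K + 1)).choose j : ℂ) * 2 ^ (P + (2 * K + 1) - j)
              * (-(1 + Complex.I * (x:ℂ))) ^ j) := by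
    intro j hj
    have hj' : j ≤ P := by simpa [Nat.lt_succ_iff] using hj
    rw [hsign,
      show P + 2 * K + 2 - j - (2 * K) - 2 = P - j by omega,
      show P + 2 * K + 2 - j - 1 = P + (2 * K + 1) - j by omega,
      show ((↑(2 * K) : ℤ) + 1 - ↑(P + 2 * K + 2 - j)) = (j : ℤ) - ((P + 1 : ℕ) : ℤ) by omega,
      zpow_sub₀ hu, zpow_natCast, zpow_natCast, div_eq_mul_inv,
      Nat.cast_choose ℂ hj', Nat.cast_choose ℂ (show j ≤ P + (2 * K + 1) by omega),
      show P + (2 * K + 1) - j = (P - j) + (2 * K + 1) by omega, pow_add,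
      neg_pow ((1:ℂ) + Complex.I * (x:ℂ))]
    have hf1 : ((P - j).factorial : ℂ) ≠ 0 := Nat.cast_ne_zero.mpr (Nat.factorial_ne_zero _)
    have hf2 : ((j).factorial : ℂ) ≠ 0 := Nat.cast_ne_zero.mpr (Nat.factorial_ne_zero _)
    have hf3 : (((P - j) + (2 * K + 1)).factorial : ℂ) ≠ 0 :=
      Nat.cast_ne_zero.mpr (Nat.factorial_ne_zero _)
    have hf4 : ((P + (2 * K + 1)).factorial : ℂ) ≠ 0 :=
      Nat.cast_ne_zero.mpr (Nat.factorial_ne_zero _)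
    field_simp
    ring
  rw [Finset.sum_congr rfl hL, ← Finset.mul_sum]
  have hpoly := polyid P (2 * K + 1) (by omega) (1 + Complex.I * (x:ℂ))
  simp only [Nat.add_sub_cancel] at hpoly
  have hsub : (∑ j ∈ Finset.range (P + 1),
        ((P + (2 * K + 1)).choose j : ℂ) * 2 ^ (P + (2 * K + 1) - j)
          * (-(1 + Complex.I * (x:ℂ))) ^ j)
      = (2 - (1 + Complex.I * (x:ℂ))) ^ (P + (2 * K + 1))
        - ∑ k ∈ Finset.range (2 * K + 1),
            ((P + (2 * K + 1)).choose (2 * K - k) : ℂ) * 2 ^ (2 * K - k)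
              * (-(1 + Complex.I * (x:ℂ))) ^ (P + 1 + k) := by
    linear_combination -hpoly
  rw [hsub]
  -- final algebra
  rw [show (2:ℂ) ^ ((1:ℤ) - 2 * ((K + 1 : ℕ) : ℤ)) = ((2:ℂ) ^ (2 * K + 1))⁻¹ by
      rw [show (1:ℤ) - 2 * ((K + 1 : ℕ) : ℤ) = -((2 * K + 1 : ℕ) : ℤ) by push_cast; ring,
        zpow_neg, zpow_natCast],
    show (1 + Complex.I * (x:ℂ)) ^ (-((P + (K + 1) : ℕ) : ℤ))
        = ((1 + Complex.I * (x:ℂ)) ^ (P + (K + 1)))⁻¹ by rw [zpow_neg, zpow_natCast]]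
  have hfq : (((P + (2 * K + 1)).factorial : ℕ) : ℂ) ≠ 0 :=
    Nat.cast_ne_zero.mpr (Nat.factorial_ne_zero _)
  have hT1 : (Complex.I * (-1:ℂ) ^ (K + 1) * ((2 * K).factorial : ℂ)
        * ((P.factorial : ℂ) / (((P + (2 * K + 1)).factorial : ℕ) : ℂ)))
        * (((2:ℂ) ^ (2 * K + 1))⁻¹ * (1 - Complex.I * (x:ℂ)) ^ (P + (K + 1))
            * ((1 + Complex.I * (x:ℂ)) ^ (P + (K + 1)))⁻¹ * (1 + (x:ℂ) ^ 2) ^ K)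
      = (Complex.I * (-1:ℂ) ^ (K + 1) * ((2 * K).factorial : ℂ) * (P.factorial : ℂ)
            / (((P + (2 * K + 1)).factorial : ℕ) : ℂ) / 2 ^ (2 * K + 1)
            * (((1 + Complex.I * (x:ℂ)) ^ (P + 1))⁻¹))
          * (2 - (1 + Complex.I * (x:ℂ))) ^ (P + (2 * K + 1)) := by
    rw [show (1:ℂ) - Complex.I * (x:ℂ) = 2 - (1 + Complex.I * (x:ℂ)) by ring,
      show (1:ℂ) + (x:ℂ) ^ 2 = (2 - (1 + Complex.I * (x:ℂ))) * (1 + Complex.I * (x:ℂ)) by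
        linear_combination (x:ℂ) ^ 2 * Complex.I_sq,
      mul_pow]
    field_simp
    ring
  rw [mul_sub, mul_add, Finset.mul_sum, Finset.mul_sum, Finset.mul_sum]
  have hterm : ∀ k ∈ Finset.range (2 * K + 1),
      (Complex.I * (-1:ℂ) ^ (K + 1) * ((2 * K).factorial : ℂ)
          * ((P.factorial : ℂ) / (((P + (2 * K + 1)).factorial : ℕ) : ℂ)))
        * ((-1:ℂ) ^ (P + 2 * K + 2) / 2
            * (((P + (2 * K + 1)).choose (2 * K - k) : ℂ)
                * ((1 + Complex.I * (x:ℂ)) / (-2)) ^ k))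
      = -((Complex.I * (-1:ℂ) ^ (K + 1) * ((2 * K).factorial : ℂ) * (P.factorial : ℂ)
            / (((P + (2 * K + 1)).factorial : ℕ) : ℂ) / 2 ^ (2 * K + 1)
            * (((1 + Complex.I * (x:ℂ)) ^ (P + 1))⁻¹))
          * (((P + (2 * K + 1)).choose (2 * K - k) : ℂ) * 2 ^ (2 * K - k)
              * (-(1 + Complex.I * (x:ℂ))) ^ (P + 1 + k))) := by
    intro k hk
    have hk' : k ≤ 2 * K := by simpa [Nat.lt_succ_iff] using hk
    rw [hpar,
      show (1 + Complex.I * (x:ℂ)) / (-2) = -((1 + Complex.I * (x:ℂ)) / 2) by ring,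
      neg_pow ((1 + Complex.I * (x:ℂ)) / 2), div_pow,
      neg_pow ((1 + Complex.I * (x:ℂ))),
      show (2:ℂ) ^ (2 * K + 1) = 2 ^ (2 * K - k) * 2 ^ (k + 1) by
        rw [← pow_add]; congr 1; omega]
    field_simp
    ring
  rw [Finset.sum_congr rfl hterm, Finset.sum_neg_distrib]
  linear_combination -hT1
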